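/- Let A be a commutative ring in which 2 is invertible. Let T_A be the subgroup of A ⊗_ℤ A generated by all elements x ⊗ (a²y) − (a²x) ⊗ y and x ⊗ (2a y) − (2a x) ⊗ y for a, x, y ∈ A. Then the multiplication map A ⊗_ℤ A → A, x ⊗ y ↦ x*y, induces an isomorphism of abelian groups (A ⊗_ℤ A)/T_A ≅ A, with inverse x ↦ class of 1 ⊗ x. -/

import Mathlib

open TensorProduct

/-- Let `A` be a commutative ring in which 2 is invertible, and `T_A ⊆ A ⊗_ℤ A` the
subgroup generated by the elements `x ⊗ (a²y) − (a²x) ⊗ y` and `x ⊗ (2ay) − (2ax) ⊗ y`.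
Then multiplication induces an isomorphism of abelian groups `(A ⊗_ℤ A)/T_A ≅ A` with
inverse `x ↦ [1 ⊗ x]`. -/
theorem thr_pi0_two_invertible (A : Type*) [CommRing A] (h2 : IsUnit (2 : A))
    (T : AddSubgroup (A ⊗[ℤ] A))
    (hT : T = AddSubgroup.closure
      {z : A ⊗[ℤ] A | ∃ a x y : A,
        z = x ⊗ₜ[ℤ] (a ^ 2 * y) - (a ^ 2 * x) ⊗ₜ[ℤ] y ∨
        z = x ⊗ₜ[ℤ] (2 * a * y) - (2 * a * x) ⊗ₜ[ℤ] y}) :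
    ∃ g : (A ⊗[ℤ] A) ⧸ T →+ A,
      (∀ x y : A, g (QuotientAddGroup.mk (x ⊗ₜ[ℤ] y)) = x * y) ∧
      Function.LeftInverse g
        (fun x : A => (QuotientAddGroup.mk ((1 : A) ⊗ₜ[ℤ] x) : (A ⊗[ℤ] A) ⧸ T)) ∧
      Function.RightInverse g
        (fun x : A => (QuotientAddGroup.mk ((1 : A) ⊗ₜ[ℤ] x) : (A ⊗[ℤ] A) ⧸ T)) := by
  obtain ⟨c, hc⟩ := h2.exists_right_inv
  set m : A ⊗[ℤ] A →+ A := (LinearMap.mul' ℤ A).toAddMonoidHom with hm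
  have hker : T ≤ m.ker := by
    intro z hz
    rw [AddMonoidHom.mem_ker]
    rw [hT] at hz
    induction hz using AddSubgroup.closure_induction with
    | mem z hz =>
      obtain ⟨a, x, y, hz | hz⟩ := hz <;>
        simp [hz, hm, LinearMap.mul'_apply] <;> ring
    | zero => simp
    | add a b _ _ ha hb => simp [ha, hb]
    | neg a _ ha => simp [ha]
  refine ⟨QuotientAddGroup.lift T m hker, ?_, ?_, ?_⟩
  · intro x y
    simp [hm, LinearMap.mul'_apply]
  · intro x
    simp [hm, LinearMap.mul'_apply]
  · -- key membership lemma
    have key : ∀ x y : A, x ⊗ₜ[ℤ] y - (1 : A) ⊗ₜ[ℤ] (x * y) ∈ T := by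
      intro x y
      set u : A := c * (x + 1) with hu
      set v : A := c * (x - 1) with hv
      have hx : u ^ 2 - v ^ 2 = x := by
        rw [hu, hv]; linear_combination (2 * c + 1) * x * hc
      have h1 : (1 : A) ⊗ₜ[ℤ] (u ^ 2 * y) - (u ^ 2 * (1 : A)) ⊗ₜ[ℤ] y ∈ T := by
        rw [hT]; exact AddSubgroup.subset_closure ⟨u, 1, y, Or.inl rfl⟩
      have h2' : (1 : A) ⊗ₜ[ℤ] (v ^ 2 * y) - (v ^ 2 * (1 : A)) ⊗ₜ[ℤ] y ∈ T := by
        rw [hT]; exact AddSubgroup.subset_closure ⟨v, 1, y, Or.inl rfl⟩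
      have gen : ∀ p q x' y' : A, p - q = x' → x' ⊗ₜ[ℤ] y' - (1 : A) ⊗ₜ[ℤ] (x' * y') =
          ((1 : A) ⊗ₜ[ℤ] (q * y') - (q * (1 : A)) ⊗ₜ[ℤ] y') -
          ((1 : A) ⊗ₜ[ℤ] (p * y') - (p * (1 : A)) ⊗ₜ[ℤ] y') := by
        intro p q x' y' h
        subst h
        simp only [mul_one, sub_mul, sub_tmul, tmul_sub]
        abel
      have heq := gen (u ^ 2) (v ^ 2) x y hx
      rw [heq]
      exact sub_mem h2' h1
    intro z
    induction z using QuotientAddGroup.induction_on with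
    | H t =>
      induction t using TensorProduct.induction_on with
      | zero => simp
      | tmul x y =>
        show (QuotientAddGroup.mk ((1 : A) ⊗ₜ[ℤ]
            (QuotientAddGroup.lift T m hker (QuotientAddGroup.mk (x ⊗ₜ[ℤ] y)))) :
            (A ⊗[ℤ] A) ⧸ T) = QuotientAddGroup.mk (x ⊗ₜ[ℤ] y)
        rw [QuotientAddGroup.lift_mk]
        have : m (x ⊗ₜ[ℤ] y) = x * y := by simp [hm, LinearMap.mul'_apply]
        rw [this, QuotientAddGroup.eq]
        have := key x y
        have h' : -((1 : A) ⊗ₜ[ℤ] (x * y)) + x ⊗ₜ[ℤ] y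
            = x ⊗ₜ[ℤ] y - (1 : A) ⊗ₜ[ℤ] (x * y) := by abel
        rw [h']
        exact this
      | add a b ha hb =>
        show (QuotientAddGroup.mk ((1 : A) ⊗ₜ[ℤ]
            (QuotientAddGroup.lift T m hker (QuotientAddGroup.mk (a + b)))) :
            (A ⊗[ℤ] A) ⧸ T) = QuotientAddGroup.mk (a + b)
        rw [show (QuotientAddGroup.mk (a + b) : (A ⊗[ℤ] A) ⧸ T)
            = QuotientAddGroup.mk a + QuotientAddGroup.mk b from rfl, map_add, tmul_add]
        calc (QuotientAddGroup.mk ((1 : A) ⊗ₜ[ℤ]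
              (QuotientAddGroup.lift T m hker (QuotientAddGroup.mk a)) +
              (1 : A) ⊗ₜ[ℤ]
              (QuotientAddGroup.lift T m hker (QuotientAddGroup.mk b))) : (A ⊗[ℤ] A) ⧸ T)
            = QuotientAddGroup.mk ((1 : A) ⊗ₜ[ℤ]
              (QuotientAddGroup.lift T m hker (QuotientAddGroup.mk a))) +
              QuotientAddGroup.mk ((1 : A) ⊗ₜ[ℤ]
              (QuotientAddGroup.lift T m hker (QuotientAddGroup.mk b))) := rfl
          _ = QuotientAddGroup.mk a + QuotientAddGroup.mk b := congrArg₂ HAdd.hAdd ha hb
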